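/- Let m and k be positive integers with k odd and gcd(m,k) = 1, and let f(x) = x^{(3^k+1)/2} on F_{3^m}. Let C_f ⊆ F_3^{3^m+1} be the subfield code with codewords ((Tr(a f(x)+bx)+c)_{x∈F_{3^m}}, Tr(a)) for a,b ∈ F_{3^m}, c ∈ F_3, and let A_i^⊥ be the number of vectors of Hamming weight i in the dual code C_f^⊥. Then A_1^⊥ = A_2^⊥ = A_3^⊥ = 0. -/

import Mathlib

noncomputable section
open scoped Classical

instance : Fact (Nat.Prime 3) := ⟨Nat.prime_three⟩

noncomputable instance (p n : ℕ) [Fact p.Prime] : Fintype (GaloisField p n) :=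
  Fintype.ofFinite _

/-- The absolute trace map from `F_{3^m}` to `F_3`. -/
def tr (m : ℕ) (x : GaloisField 3 m) : ZMod 3 :=
  Algebra.trace (ZMod 3) (GaloisField 3 m) x

/-- The Coulter–Matthews function `f(x) = x^{(3^k+1)/2}` on `F_{3^m}`. -/
def cmf (m k : ℕ) (x : GaloisField 3 m) : GaloisField 3 m :=
  x ^ ((3 ^ k + 1) / 2)

/-- The codeword `((Tr(a f(x)+bx)+c)_{x∈F_{3^m}}, Tr(a))` of length `3^m + 1`. -/
def fullWord (m k : ℕ) (a b : GaloisField 3 m) (c : ZMod 3) :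
    Option (GaloisField 3 m) → ZMod 3 :=
  fun i => i.elim (tr m a) fun x => tr m (a * cmf m k x + b * x) + c

/-- The dual code `C_f^⊥`: all vectors orthogonal to every codeword of `C_f`. -/
def fullDual (m k : ℕ) : Set (Option (GaloisField 3 m) → ZMod 3) :=
  {v | ∀ (a b : GaloisField 3 m) (c : ZMod 3), ∑ i, v i * fullWord m k a b c i = 0}

/-- `A_i^⊥`: the number of vectors of Hamming weight `i` in `C_f^⊥`. -/
def dualA (m k i : ℕ) : ℕ :=
  Nat.card {v : Option (GaloisField 3 m) → ZMod 3 //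
    v ∈ fullDual m k ∧ hammingNorm v = i}

lemma aux_pow_pow {F : Type*} [Monoid F] (u : F) (c : ℕ) (h : u ^ c = u) (s : ℕ) :
    u ^ c ^ s = u := by
  induction s with
  | zero => simp
  | succ n ih => rw [pow_succ, pow_mul, ih, h]

lemma aux_bezout (m k : ℕ) (hm : 0 < m) (hk : 0 < k) (h : Nat.gcd m k = 1) :
    ∃ s t, m * s = k * t + 1 := by
  rcases eq_or_lt_of_le (show 1 ≤ k from hk) with h1 | h1
  · subst h1; exact ⟨1, m - 1, by omega⟩
  · obtain ⟨s, -, hs⟩ := Nat.exists_mul_mod_eq_one_of_coprime h h1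
    have hd := Nat.div_add_mod (m * s) k
    exact ⟨s, m * s / k, by omega⟩

lemma frob_fixed (m k : ℕ) (hm : 0 < m) (hk : 0 < k) (hmk : Nat.gcd m k = 1)
    (u : GaloisField 3 m) (h : u ^ 3 ^ k = u) : u ^ 3 = u := by
  obtain ⟨s, t, hst⟩ := aux_bezout m k hm hk hmk
  have hcard : u ^ 3 ^ m = u := by
    have h1 := GaloisField.card 3 m hm.ne'
    rw [Nat.card_eq_fintype_card] at h1
    rw [← h1]; exact FiniteField.pow_card u
  have h2 : u ^ 3 ^ (m * s) = u := by
    rw [show (3:ℕ) ^ (m * s) = (3 ^ m) ^ s from pow_mul 3 m s]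
    exact aux_pow_pow u _ hcard s
  have h3 : u ^ 3 ^ (k * t) = u := by
    rw [show (3:ℕ) ^ (k * t) = (3 ^ k) ^ t from pow_mul 3 k t]
    exact aux_pow_pow u _ h t
  calc u ^ 3 = (u ^ 3 ^ (k * t)) ^ 3 := by rw [h3]
    _ = u ^ (3 ^ (k * t) * 3) := (pow_mul u _ 3).symm
    _ = u ^ 3 ^ (k * t + 1) := by rw [pow_succ]
    _ = u ^ 3 ^ (m * s) := by rw [hst]
    _ = u := h2

lemma crux (m k : ℕ) (hm : 0 < m) (hk : Odd k) (hmk : Nat.gcd m k = 1)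
    (x y z : GaloisField 3 m) (hs : x + y + z = 0)
    (hf : x ^ ((3 ^ k + 1) / 2) + y ^ ((3 ^ k + 1) / 2) + z ^ ((3 ^ k + 1) / 2) = 0) :
    x = y := by
  have hk0 : 0 < k := hk.pos
  obtain ⟨e, he⟩ : ∃ e, (3 ^ k + 1) / 2 = e := ⟨_, rfl⟩
  rw [he] at hf
  have hmod4 : 3 ^ k % 4 = 3 := by
    obtain ⟨j, hj⟩ := hk
    have h9 : (9 : ℕ) ^ j % 4 = 1 := by rw [Nat.pow_mod]; norm_num
    have h93 : (3 : ℕ) ^ k = 9 ^ j * 3 := by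
      subst hj; rw [pow_succ, pow_mul]; norm_num
    omega
  obtain ⟨B, hB⟩ : ∃ B, (3:ℕ) ^ k = B := ⟨_, rfl⟩
  rw [hB] at hmod4 he
  have h2e : 2 * e = B + 1 := by omega
  have he0 : e ≠ 0 := by omega
  have heven : Even e := Nat.even_iff.mpr (by omega)
  have hodd3k : Odd ((3:ℕ) ^ k) := (by decide : Odd 3).pow
  have h3 : (3 : GaloisField 3 m) = 0 := by exact_mod_cast CharP.cast_eq_zero (GaloisField 3 m) 3
  have h2ne : (2 : GaloisField 3 m) ≠ 0 := by
    rw [show (2 : GaloisField 3 m) = -1 by linear_combination h3]; simp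
  have hzz : z = -(x + y) := by linear_combination hs
  have hdeg : ∀ w : GaloisField 3 m, w ^ e + w ^ e = 0 → w = 0 := by
    intro w hw
    have h1 : (2 : GaloisField 3 m) * w ^ e = 0 := by linear_combination hw
    rcases mul_eq_zero.mp h1 with h | h
    · exact absurd h h2ne
    · exact pow_eq_zero_iff he0 |>.mp h
  by_cases hx : x = 0
  · have hzy : z = -y := by rw [hzz, hx]; ring
    have hyy : y ^ e + y ^ e = 0 := by
      have h1 : z ^ e = y ^ e := by rw [hzy, heven.neg_pow]
      calc y ^ e + y ^ e = x ^ e + y ^ e + z ^ e := by rw [hx, h1, zero_pow he0]; ring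
        _ = 0 := hf
    rw [hx, hdeg y hyy]
  by_cases hy : y = 0
  · exfalso
    have hzy : z = -x := by rw [hzz, hy]; ring
    have hxx : x ^ e + x ^ e = 0 := by
      have h1 : z ^ e = x ^ e := by rw [hzy, heven.neg_pow]
      calc x ^ e + x ^ e = x ^ e + y ^ e + z ^ e := by rw [hy, h1, zero_pow he0]; ring
        _ = 0 := hf
    exact hx (hdeg x hxx)
  -- main case
  set P := x ^ 3 ^ k with hP
  set Q := y ^ 3 ^ k with hQ
  have hpow : ∀ w : GaloisField 3 m, (w ^ e) ^ 2 = w ^ 3 ^ k * w := by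
    intro w
    rw [← pow_mul, show e * 2 = 3 ^ k + 1 by rw [hB]; omega, pow_succ]
  have ha2 : (x ^ e) ^ 2 = P * x := hpow x
  have hb2 : (y ^ e) ^ 2 = Q * y := hpow y
  have hfrob : (x + y) ^ 3 ^ k = P + Q := add_pow_char_pow x y 3 k
  have hc2 : (z ^ e) ^ 2 = (P + Q) * (x + y) := by
    rw [hpow z, hzz, hodd3k.neg_pow, hfrob]; ring
  have hccsq : (z ^ e) ^ 2 = (x ^ e + y ^ e) ^ 2 := by
    have hc : z ^ e = -(x ^ e + y ^ e) := by linear_combination hf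
    rw [hc]; ring
  have h5 : P * y + Q * x = 2 * (x ^ e) * (y ^ e) := by
    linear_combination hccsq - hc2 + ha2 + hb2
  have key : (P * y - Q * x) ^ 2 = 0 := by
    linear_combination (P * y + Q * x + 2 * (x ^ e) * (y ^ e)) * h5
      + 4 * (y ^ e) ^ 2 * ha2 + 4 * P * x * hb2
  have hPyQx : P * y = Q * x :=
    sub_eq_zero.mp (pow_eq_zero_iff (two_ne_zero) |>.mp key)
  have hQ0 : Q ≠ 0 := pow_ne_zero _ hy
  have hu : (x / y) ^ 3 ^ k = x / y := by
    rw [div_pow, div_eq_div_iff hQ0 hy]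
    linear_combination hPyQx
  have hu3 := frob_fixed m k hm hk0 hmk _ hu
  have hroots : (x / y) * (x / y - 1) * (x / y + 1) = 0 := by linear_combination hu3
  rcases mul_eq_zero.mp hroots with h | h
  · rcases mul_eq_zero.mp h with h | h
    · rcases div_eq_zero_iff.mp h with h' | h'
      · exact absurd h' hx
      · exact absurd h' hy
    · exact (div_eq_one_iff_eq hy).mp (sub_eq_zero.mp h)
  · exfalso
    have hxy : x = -y := by
      have h1 : x / y = -1 := by linear_combination h
      have h2 := (div_eq_iff hy).mp h1
      linear_combination h2
    have hz0 : z = 0 := by rw [hzz, hxy]; ring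
    have hxx : x ^ e + x ^ e = 0 := by
      have h1 : y ^ e = x ^ e := by rw [hxy, heven.neg_pow]
      calc x ^ e + x ^ e = x ^ e + y ^ e + z ^ e := by rw [h1, hz0, zero_pow he0]; ring
        _ = 0 := hf
    exact hx (hdeg x hxx)

local notation "F" m => GaloisField 3 m
local notation "ι" m => algebraMap (ZMod 3) (GaloisField 3 m)

lemma tr_zero (m : ℕ) : tr m 0 = 0 := map_zero (Algebra.trace (ZMod 3) (GaloisField 3 m))

lemma tr_smul (m : ℕ) (c : ZMod 3) (x : F m) :
    tr m ((ι m) c * x) = c * tr m x := by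
  rw [tr, tr, ← Algebra.smul_def, map_smul, smul_eq_mul]

lemma tr_add (m : ℕ) (x y : F m) : tr m (x + y) = tr m x + tr m y :=
  map_add (Algebra.trace (ZMod 3) (GaloisField 3 m)) x y

lemma tr_nondeg (m : ℕ) (W : F m) (h : ∀ b, tr m (b * W) = 0) : W = 0 :=
  (traceForm_nondegenerate (ZMod 3) (GaloisField 3 m)).1 W
    (fun b => by rw [Algebra.traceForm_apply, mul_comm]; exact h b)

lemma tr_mul_sum (m : ℕ) {α : Type*} (s : Finset α) (f : α → ZMod 3) (g : α → F m) (b : F m) :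
    tr m (b * ∑ x ∈ s, (ι m) (f x) * g x) = ∑ x ∈ s, f x * tr m (b * g x) := by
  rw [Finset.mul_sum, tr, map_sum]
  refine Finset.sum_congr rfl fun x _ => ?_
  rw [show b * ((ι m) (f x) * g x) = (ι m) (f x) * (b * g x) by ring, ← tr, tr_smul]

lemma dual_small (m k : ℕ) (hm : 0 < m) (hk : Odd k) (hmk : Nat.gcd m k = 1)
    (v : Option (GaloisField 3 m) → ZMod 3) (hv : v ∈ fullDual m k)
    (hn : hammingNorm v ≤ 3) : v = 0 := by
  have hι : ∀ c : ZMod 3, (ι m) c = 0 → c = 0 := fun c hc =>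
    (algebraMap (ZMod 3) (GaloisField 3 m)).injective (by rw [hc, map_zero])
  have hv' : ∀ (a b : F m) (c : ZMod 3),
      v none * tr m a + ∑ x : F m, v (some x) * (tr m (a * cmf m k x + b * x) + c) = 0 := by
    intro a b c
    have h := hv a b c
    rwa [Fintype.sum_option] at h
  -- restrict sums to the support T
  set T : Finset (F m) := Finset.univ.filter (fun x => v (some x) ≠ 0) with hT
  have hmemT : ∀ x, x ∈ T ↔ v (some x) ≠ 0 := by
    intro x; rw [hT, Finset.mem_filter]; simp
  have hrestr : ∀ g : (F m) → (F m), ∑ x : F m, (ι m) (v (some x)) * g x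
      = ∑ x ∈ T, (ι m) (v (some x)) * g x := by
    intro g
    refine (Finset.sum_subset (Finset.subset_univ T) fun x _ hx => ?_).symm
    have : v (some x) = 0 := by by_contra h; exact hx ((hmemT x).mpr h)
    rw [this, map_zero, zero_mul]
  -- the three conditions
  have hvz : ∀ x, x ∉ T → v (some x) = 0 := fun x hx => by
    by_contra h; exact hx ((hmemT x).mpr h)
  have hsum0 : ∑ x ∈ T, v (some x) = 0 := by
    have h := hv' 0 0 1
    have h' : ∑ x : F m, v (some x) = 0 := by simpa [tr_zero] using h
    rw [← h']
    exact Finset.sum_subset (Finset.subset_univ T) fun x _ hx => hvz x hx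
  have hW1 : ∑ x ∈ T, (ι m) (v (some x)) * x = 0 := by
    rw [← hrestr]
    apply tr_nondeg
    intro b
    have h := hv' 0 b 0
    simp only [tr_zero, zero_mul, mul_zero, zero_add, add_zero] at h
    rw [tr_mul_sum, ← h]
  have hW2 : (ι m) (v none) + ∑ x ∈ T, (ι m) (v (some x)) * cmf m k x = 0 := by
    rw [← hrestr]
    apply tr_nondeg m _ (fun a => ?_)
    have h := hv' a 0 0
    simp only [zero_mul, add_zero, mul_zero] at h
    rw [mul_add, tr_add, tr_mul_sum, ← h]
    congr 1
    rw [show a * (ι m) (v none) = (ι m) (v none) * a by ring, tr_smul, mul_comm]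
  -- cardinality facts
  have hTcard : T.card ≤ 3 := by
    have hsub : T.map ⟨some, Option.some_injective _⟩ ⊆
        Finset.univ.filter (fun i => v i ≠ 0) := by
      intro i hi
      rw [Finset.mem_map] at hi
      obtain ⟨x, hx, rfl⟩ := hi
      rw [Finset.mem_filter]
      exact ⟨Finset.mem_univ _, (hmemT x).mp hx⟩
    calc T.card = (T.map ⟨some, Option.some_injective _⟩).card := (Finset.card_map _).symm
      _ ≤ _ := Finset.card_le_card hsub
      _ ≤ 3 := hn
  have hnonecard : v none ≠ 0 → T.card + 1 ≤ 3 := by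
    intro h0
    have hsub : insert none (T.map ⟨some, Option.some_injective _⟩) ⊆
        Finset.univ.filter (fun i => v i ≠ 0) := by
      intro i hi
      rw [Finset.mem_insert] at hi
      rcases hi with rfl | hi
      · rw [Finset.mem_filter]; exact ⟨Finset.mem_univ _, h0⟩
      · rw [Finset.mem_map] at hi
        obtain ⟨x, hx, rfl⟩ := hi
        rw [Finset.mem_filter]
        exact ⟨Finset.mem_univ _, (hmemT x).mp hx⟩
    have hnone : none ∉ T.map ⟨some, Option.some_injective _⟩ := by simp
    calc T.card + 1 = (insert none (T.map ⟨some, Option.some_injective _⟩)).card := by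
          rw [Finset.card_insert_of_notMem hnone, Finset.card_map]
      _ ≤ _ := Finset.card_le_card hsub
      _ ≤ 3 := hn
  -- case analysis on |T|
  have hcases : T.card = 0 ∨ T.card = 1 ∨ T.card = 2 ∨ T.card = 3 := by omega
  rcases hcases with h0 | h1 | h2 | h3
  · -- T empty
    have hTe : T = ∅ := Finset.card_eq_zero.mp h0
    have hnone : v none = 0 := by
      apply hι
      have := hW2
      rwa [hTe, Finset.sum_empty, add_zero] at this
    funext i
    cases i with
    | none => exact hnone
    | some x => exact hvz x (by rw [hTe]; exact Finset.notMem_empty x)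
  · -- |T| = 1
    exfalso
    obtain ⟨x, hx⟩ := Finset.card_eq_one.mp h1
    have : v (some x) = 0 := by rwa [hx, Finset.sum_singleton] at hsum0
    exact (hmemT x).mp (by rw [hx]; exact Finset.mem_singleton_self x) this
  · -- |T| = 2
    exfalso
    obtain ⟨x, y, hxy, hx⟩ := Finset.card_eq_two.mp h2
    have hmx : v (some x) ≠ 0 := (hmemT x).mp (by rw [hx]; simp)
    have hs0 : v (some x) + v (some y) = 0 := by
      rwa [hx, Finset.sum_insert (by simpa using hxy), Finset.sum_singleton] at hsum0
    have hs1 : (ι m) (v (some x)) * x + (ι m) (v (some y)) * y = 0 := by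
      rwa [hx, Finset.sum_insert (by simpa using hxy), Finset.sum_singleton] at hW1
    have hvy : v (some y) = - v (some x) := by linear_combination hs0
    rw [hvy, map_neg] at hs1
    have : (ι m) (v (some x)) * (x - y) = 0 := by linear_combination hs1
    rcases mul_eq_zero.mp this with h | h
    · exact hmx (hι _ h)
    · exact hxy (by linear_combination h)
  · -- |T| = 3
    exfalso
    obtain ⟨x, y, z, hxy, hxz, hyz, hx⟩ := Finset.card_eq_three.mp h3
    have hnone : v none = 0 := by
      by_contra h0
      have := hnonecard h0
      omega
    have hmx : v (some x) ≠ 0 := (hmemT x).mp (by rw [hx]; simp)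
    have hmy : v (some y) ≠ 0 := (hmemT y).mp (by rw [hx]; simp)
    have hmz : v (some z) ≠ 0 := (hmemT z).mp (by rw [hx]; simp)
    have hnm : x ∉ ({y, z} : Finset (F m)) := by simp [hxy, hxz]
    have hnm2 : y ∉ ({z} : Finset (F m)) := by simp [hyz]
    have hs0 : v (some x) + (v (some y) + v (some z)) = 0 := by
      rwa [hx, Finset.sum_insert hnm, Finset.sum_insert hnm2, Finset.sum_singleton] at hsum0
    have hall : ∀ a b c : ZMod 3, a ≠ 0 → b ≠ 0 → c ≠ 0 → a + (b + c) = 0 →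
        a = b ∧ b = c := by decide
    obtain ⟨he1, he2⟩ := hall _ _ _ hmx hmy hmz hs0
    have hs1 : (ι m) (v (some x)) * x + ((ι m) (v (some y)) * y + (ι m) (v (some z)) * z)
        = 0 := by
      rwa [hx, Finset.sum_insert hnm, Finset.sum_insert hnm2, Finset.sum_singleton] at hW1
    have hs2 : (ι m) (v (some x)) * cmf m k x + ((ι m) (v (some y)) * cmf m k y
        + (ι m) (v (some z)) * cmf m k z) = 0 := by
      have := hW2
      rw [hnone, map_zero, zero_add, hx, Finset.sum_insert hnm, Finset.sum_insert hnm2,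
        Finset.sum_singleton] at this
      exact this
    have hry : (ι m) (v (some y)) = (ι m) (v (some x)) := by rw [he1]
    have hrz : (ι m) (v (some z)) = (ι m) (v (some x)) := by rw [he1, he2]
    rw [hry, hrz] at hs1 hs2
    have hιx : (ι m) (v (some x)) ≠ 0 := fun h => hmx (hι _ h)
    have hfac1 : (ι m) (v (some x)) * (x + y + z) = 0 := by linear_combination hs1
    have hxyz : x + y + z = 0 := by
      rcases mul_eq_zero.mp hfac1 with h | h
      · exact absurd h hιx
      · exact h
    have hfac2 : (ι m) (v (some x)) * (cmf m k x + cmf m k y + cmf m k z) = 0 := by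
      linear_combination hs2
    have hcmf : cmf m k x + cmf m k y + cmf m k z = 0 := by
      rcases mul_eq_zero.mp hfac2 with h | h
      · exact absurd h hιx
      · exact h
    exact hxy (crux m k hm hk hmk x y z hxyz (by simpa [cmf] using hcmf))


/-- For `k` odd with `gcd(m,k) = 1` and the Coulter–Matthews
function `f(x) = x^{(3^k+1)/2}` on `F_{3^m}`, the dual `C_f^⊥` of the subfield code
has `A_1^⊥ = A_2^⊥ = A_3^⊥ = 0`. -/
theorem stmt_13 (m k : ℕ) (hm : 0 < m) (hk : Odd k) (hmk : Nat.gcd m k = 1) :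
    dualA m k 1 = 0 ∧ dualA m k 2 = 0 ∧ dualA m k 3 = 0 := by
  have key : ∀ i, 1 ≤ i → i ≤ 3 → dualA m k i = 0 := by
    intro i hi1 hi3
    rw [dualA, Nat.card_eq_zero]
    left
    refine ⟨?_⟩
    rintro ⟨v, hvd, hvn⟩
    have hv0 := dual_small m k hm hk hmk v hvd (by rw [hvn]; exact hi3)
    rw [hv0, hammingNorm_zero] at hvn
    omega
  exact ⟨key 1 (by norm_num) (by norm_num), key 2 (by norm_num) (by norm_num),
    key 3 (by norm_num) (by norm_num)⟩
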